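/- Let $\Lambda \subset [0,\infty)$ be defined, for a given summable family of moduli, by $\Lambda = \{\sum_{k=1}^\infty n_k |\zeta_k| + E_0 : n_k \in \mathbb{Z}_{\ge 0}, \sum_k n_k < \infty\}$ where $|\zeta_k| \ge 0$, infinitely many $\zeta_k$ equal $1$, and $E_0 \ge 0$ is a constant. Let $\Lambda^a$ be the set of points of $\Lambda$ that are accumulation points or occur with infinite multiplicity. Then $\Lambda^a = \Lambda + \mathbb{N} := \{x + n : x \in \Lambda, n \in \mathbb{N}\}$, this set is closed, and $\Lambda^a \subset \Lambda$. -/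

import Mathlib

open Finsupp Filter

namespace Stmt15Aux

noncomputable section

/-- Pigeonhole: an infinite set mapped into a finite set has an infinite fiber. -/
lemma aux_fiber {α β : Type*} {S : Set α} (hS : S.Infinite) (g : α → β)
    {T : Set β} (hT : T.Finite) (hg : ∀ a ∈ S, g a ∈ T) :
    ∃ b, {a ∈ S | g a = b}.Infinite := by
  by_contra h
  push_neg at h
  have hsub : S ⊆ ⋃ b ∈ T, {a ∈ S | g a = b} := fun a ha =>
    Set.mem_biUnion (hg a ha) ⟨ha, rfl⟩
  exact hS ((hT.biUnion fun b _ => h b).subset hsub)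

/-- A positive lower bound for the positive elements of a finite set of reals,
which is also at most `ε`. -/
lemma aux_minpos {S : Set ℝ} (hS : S.Finite) {ε : ℝ} (hε : 0 < ε) :
    ∃ d, 0 < d ∧ d ≤ ε ∧ ∀ e ∈ S, 0 < e → d ≤ e := by
  classical
  set T : Finset ℝ := insert ε (hS.toFinset.filter fun e => 0 < e) with hT
  have hne : T.Nonempty := ⟨ε, Finset.mem_insert_self _ _⟩
  refine ⟨T.min' hne, ?_, T.min'_le ε (Finset.mem_insert_self _ _), fun e he he0 => ?_⟩
  · have := T.min'_mem hne
    rcases Finset.mem_insert.1 this with h | h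
    · rw [h]; exact hε
    · exact (Finset.mem_filter.1 h).2
  · exact T.min'_le e (Finset.mem_insert.2 (Or.inr (Finset.mem_filter.2
      ⟨hS.mem_toFinset.2 he, he0⟩)))

variable (z : ℕ → ℝ) (E0 : ℝ)

def oval (n : ℕ →₀ ℕ) : ℝ := E0 + n.sum fun k c => (c : ℝ) * z k

def omass (n : ℕ →₀ ℕ) : ℕ := n.sum fun _ c => c

lemma oval_add (n m : ℕ →₀ ℕ) :
    oval z E0 (n + m) = oval z E0 n + m.sum fun k c => (c : ℝ) * z k := by
  unfold oval
  rw [Finsupp.sum_add_index' (fun k => by simp) (fun k c c' => by push_cast; ring)]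
  ring

lemma omass_add (n m : ℕ →₀ ℕ) : omass (n + m) = omass n + omass m := by
  unfold omass
  rw [Finsupp.sum_add_index' (fun k => rfl) (fun k c c' => rfl)]

lemma oval_add_single (n : ℕ →₀ ℕ) (k j : ℕ) :
    oval z E0 (n + Finsupp.single k j) = oval z E0 n + j * z k := by
  rw [oval_add, Finsupp.sum_single_index (by simp)]

lemma omass_cast (t : ℕ →₀ ℕ) : (omass t : ℝ) = ∑ k ∈ t.support, (t k : ℝ) := by
  unfold omass
  rw [Finsupp.sum]
  push_cast
  rfl

lemma apply_le_omass (n : ℕ →₀ ℕ) (k : ℕ) : n k ≤ omass n := by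
  by_cases h : k ∈ n.support
  · exact Finset.single_le_sum (fun _ _ => Nat.zero_le _) h
  · simp [Finsupp.notMem_support_iff.1 h]

lemma omass_eq_zero {t : ℕ →₀ ℕ} (h : omass t = 0) : t = 0 := by
  ext k
  simp only [Finsupp.coe_zero, Pi.zero_apply]
  have := apply_le_omass t k
  omega

lemma tail_est {ε : ℝ} (t : ℕ →₀ ℕ) (ht : ∀ k ∈ t.support, |z k - 1| < ε) :
    |(t.sum fun k c => (c : ℝ) * z k) - (omass t : ℝ)| ≤ ε * omass t := by
  rw [Finsupp.sum, omass_cast, ← Finset.sum_sub_distrib]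
  calc |∑ k ∈ t.support, ((t k : ℝ) * z k - (t k : ℝ))|
      ≤ ∑ k ∈ t.support, |(t k : ℝ) * z k - (t k : ℝ)| := Finset.abs_sum_le_sum_abs _ _
    _ ≤ ∑ k ∈ t.support, ε * (t k : ℝ) := by
        refine Finset.sum_le_sum fun k hk => ?_
        have h1 : (t k : ℝ) * z k - (t k : ℝ) = (t k : ℝ) * (z k - 1) := by ring
        rw [h1, abs_mul, abs_of_nonneg (by positivity : (0:ℝ) ≤ (t k : ℝ))]
        have h2 := (ht k hk).le
        have h3 : (0:ℝ) ≤ (t k : ℝ) := by positivity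
        nlinarith [abs_nonneg (z k - 1)]
    _ = ε * ∑ k ∈ t.support, (t k : ℝ) := by rw [Finset.mul_sum]

lemma sum_ge {c : ℝ} (hc : ∀ k, c ≤ z k) (hc0 : 0 ≤ c) (n : ℕ →₀ ℕ) :
    c * (omass n : ℝ) ≤ n.sum fun k cc => (cc : ℝ) * z k := by
  rw [omass_cast, Finset.mul_sum, Finsupp.sum]
  refine Finset.sum_le_sum fun k hk => ?_
  have := hc k
  have h3 : (0:ℝ) ≤ (n k : ℝ) := by positivity
  nlinarith

lemma oval_nonneg (hzpos : ∀ k, 0 < z k) (hE0 : 0 ≤ E0) (n : ℕ →₀ ℕ) :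
    0 ≤ oval z E0 n := by
  unfold oval
  have : 0 ≤ n.sum fun k c => (c : ℝ) * z k := by
    refine Finset.sum_nonneg fun k _ => ?_
    have := (hzpos k).le
    positivity
  linarith

/-- Mass bound: values below `x+1` force bounded total occupation number. -/
lemma massBound (hzpos : ∀ k, 0 < z k)
    (hzacc : ∀ ε : ℝ, 0 < ε → {k | ε ≤ |z k - 1|}.Finite) (hE0 : 0 ≤ E0) (x : ℝ) :
    ∃ M : ℕ, ∀ n : ℕ →₀ ℕ, oval z E0 n < x + 1 → omass n ≤ M := by
  classical
  have hF : {k | (1:ℝ)/2 ≤ |z k - 1|}.Finite := hzacc (1/2) (by norm_num)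
  set T : Finset ℝ := insert (1/2 : ℝ) (hF.toFinset.image z) with hT
  have hne : T.Nonempty := ⟨1/2, Finset.mem_insert_self _ _⟩
  set c := T.min' hne with hcdef
  have hc0 : 0 < c := by
    have := T.min'_mem hne
    rcases Finset.mem_insert.1 this with h | h
    · rw [hcdef, h]; norm_num
    · obtain ⟨k, _, hk⟩ := Finset.mem_image.1 h
      rw [hcdef, ← hk] at *
      exact hzpos k
  have hcz : ∀ k, c ≤ z k := by
    intro k
    by_cases h : (1:ℝ)/2 ≤ |z k - 1|
    · exact T.min'_le _ (Finset.mem_insert.2 (Or.inr (Finset.mem_image.2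
        ⟨k, hF.mem_toFinset.2 h, rfl⟩)))
    · push_neg at h
      have h1 := abs_lt.1 h
      have h2 : c ≤ 1/2 := T.min'_le _ (Finset.mem_insert_self _ _)
      linarith [h1.1]
  refine ⟨⌈(x + 1) / c⌉₊, fun n hn => ?_⟩
  have h1 : c * (omass n : ℝ) ≤ n.sum fun k cc => (cc : ℝ) * z k :=
    sum_ge z hcz hc0.le n
  have h2 : (n.sum fun k cc => (cc : ℝ) * z k) < x + 1 := by
    unfold oval at hn; linarith
  have h3 : (omass n : ℝ) ≤ (x + 1) / c := by
    rw [le_div_iff₀ hc0]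
    nlinarith
  have h4 : (omass n : ℝ) ≤ (⌈(x + 1) / c⌉₊ : ℝ) := h3.trans (Nat.le_ceil _)
  exact_mod_cast h4

/-- One pigeonhole step: from infinitely many bounded-mass representations near `x`,
extract an exact "head + integer tail mass" approximation with positive tail mass. -/
lemma pigeon_step (hzacc : ∀ ε : ℝ, 0 < ε → {k | ε ≤ |z k - 1|}.Finite)
    (M : ℕ) (x ε : ℝ) (hε : 0 < ε)
    (H : {n : ℕ →₀ ℕ | omass n ≤ M ∧ |oval z E0 n - x| < ε}.Infinite) :
    ∃ r : ℕ →₀ ℕ, ∃ m : ℕ, 1 ≤ m ∧ omass r + m ≤ M ∧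
      |x - (oval z E0 r + m)| < (1 + M) * ε := by
  classical
  set S : Set (ℕ →₀ ℕ) := {n | omass n ≤ M ∧ |oval z E0 n - x| < ε} with hS
  set A : Finset ℕ := (hzacc ε hε).toFinset with hA
  set p : ℕ → Prop := fun k => k ∈ A with hp
  set g : (ℕ →₀ ℕ) → (ℕ →₀ ℕ) × ℕ :=
    fun n => (n.filter p, omass (n.filter fun k => ¬ p k)) with hgdef
  set s : ℕ →₀ ℕ := Finsupp.indicator A (fun _ _ => M) with hsdef
  have hdecomp : ∀ n : ℕ →₀ ℕ, (n.filter p) + (n.filter fun k => ¬ p k) = n :=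
    fun n => Finsupp.filter_pos_add_filter_neg n p
  have hmassdec : ∀ n : ℕ →₀ ℕ, omass n = omass (n.filter p) + omass (n.filter fun k => ¬ p k) :=
    fun n => by rw [← omass_add, hdecomp]
  have hg : ∀ n ∈ S, g n ∈ ((Finset.Iic s ×ˢ Finset.Iic M : Finset _) : Set ((ℕ →₀ ℕ) × ℕ)) := by
    intro n hn
    simp only [Finset.coe_product, Set.mem_prod, Finset.mem_coe, Finset.mem_Iic]
    constructor
    · rw [Finsupp.le_iff]
      intro i hi
      have hpi : p i := by
        have := Finsupp.support_filter (p := p) (f := n) ▸ hi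
        exact (Finset.mem_filter.1 this).2
      have h1 : (n.filter p) i = n i := Finsupp.filter_apply_pos p n hpi
      have h2 : s i = M := by
        rw [hsdef, Finsupp.indicator_apply, dif_pos hpi]
      rw [h1, h2]
      exact (apply_le_omass n i).trans hn.1
    · exact le_trans (by rw [hmassdec n]; exact Nat.le_add_left _ _) hn.1
  obtain ⟨⟨r, m⟩, hfib⟩ := aux_fiber H g (Finset.finite_toSet _) hg
  obtain ⟨n₀, hn₀S, hn₀g⟩ := hfib.nonempty
  have hr : n₀.filter p = r := (Prod.mk.injEq _ _ _ _ ▸ hn₀g).1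
  have hm : omass (n₀.filter fun k => ¬ p k) = m := (Prod.mk.injEq _ _ _ _ ▸ hn₀g).2
  have hm1 : 1 ≤ m := by
    rcases Nat.eq_zero_or_pos m with h0 | h; swap; · exact h
    exfalso
    apply Set.not_infinite.2 (Set.finite_singleton r) (hfib.mono ?_)
    intro n hn
    have h1 : n.filter p = r := (Prod.mk.injEq _ _ _ _ ▸ hn.2).1
    have h2 : omass (n.filter fun k => ¬ p k) = m := (Prod.mk.injEq _ _ _ _ ▸ hn.2).2
    have h3 : (n.filter fun k => ¬ p k) = 0 := omass_eq_zero (by rw [h2, h0])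
    have := hdecomp n
    rw [h1, h3, add_zero] at this
    exact this.symm
  refine ⟨r, m, hm1, ?_, ?_⟩
  · rw [← hr, ← hm, ← hmassdec n₀]; exact hn₀S.1
  · set t : ℕ →₀ ℕ := n₀.filter fun k => ¬ p k with htdef
    have hval : oval z E0 n₀ = oval z E0 r + t.sum fun k c => (c : ℝ) * z k := by
      rw [← hr, ← oval_add, hdecomp]
    have htail : |(t.sum fun k c => (c : ℝ) * z k) - (m : ℝ)| ≤ ε * m := by
      rw [← hm]
      refine tail_est z t fun k hk => ?_
      have h1 : ¬ p k := by
        have := Finsupp.support_filter (p := fun k => ¬ p k) (f := n₀) ▸ hk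
        exact (Finset.mem_filter.1 this).2
      have h2 : k ∉ A := h1
      rw [hA] at h2
      have := (hzacc ε hε).mem_toFinset.not.1 h2
      simpa using not_le.1 (by simpa using this)
    have hmM : (m : ℝ) ≤ (M : ℝ) := by
      exact_mod_cast le_trans (by omega : m ≤ omass r + m)
        (by rw [← hr, ← hm, ← hmassdec n₀]; exact hn₀S.1)
    have hdist := hn₀S.2
    have hε' : ε * (m : ℝ) ≤ ε * (M : ℝ) := by nlinarith
    calc |x - (oval z E0 r + m)|
        ≤ |x - oval z E0 n₀| + |oval z E0 n₀ - (oval z E0 r + m)| := abs_sub_le _ _ _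
      _ < ε + ε * M := by
          rw [abs_sub_comm x _]
          have : oval z E0 n₀ - (oval z E0 r + m) =
              (t.sum fun k c => (c : ℝ) * z k) - (m : ℝ) := by rw [hval]; ring
          rw [this]
          have := htail.trans hε'
          linarith
      _ = (1 + M) * ε := by ring

/-- Key lemma: if for every `ε > 0` there are infinitely many representations of mass
at most `M` within `ε` of `x`, then `x` is exactly a value plus a positive integer. -/
lemma keyQ (hzacc : ∀ ε : ℝ, 0 < ε → {k | ε ≤ |z k - 1|}.Finite) :
    ∀ M : ℕ, ∀ x : ℝ,
      (∀ ε : ℝ, 0 < ε → {n : ℕ →₀ ℕ | omass n ≤ M ∧ |oval z E0 n - x| < ε}.Infinite) →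
      ∃ r : ℕ →₀ ℕ, ∃ j : ℕ, 1 ≤ j ∧ x = oval z E0 r + j := by
  intro M
  induction M using Nat.strong_induction_on with
  | _ M IH =>
  intro x H
  have step : ∀ j : ℕ, ∃ r : ℕ →₀ ℕ, ∃ m : ℕ, 1 ≤ m ∧ omass r + m ≤ M ∧
      |x - (oval z E0 r + m)| < (1 + M) * (1 / (j + 1)) := fun j =>
    pigeon_step z E0 hzacc M x (1 / (j + 1)) (by positivity) (H _ (by positivity))
  choose r m hm1 hm2 hdist using step
  obtain ⟨m₀, hJ⟩ := aux_fiber Set.infinite_univ m (Finset.Iic M).finite_toSet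
    (fun j _ => Finset.mem_coe.2 (Finset.mem_Iic.2
      (le_trans (by omega : m j ≤ omass (r j) + m j) (hm2 j))))
  obtain ⟨j₀, _, hj₀⟩ := hJ.nonempty
  have hm₀1 : 1 ≤ m₀ := hj₀ ▸ hm1 j₀
  have hm₀M : m₀ ≤ M := hj₀ ▸ le_trans (by omega : m j₀ ≤ omass (r j₀) + m j₀) (hm2 j₀)
  by_cases hex : ∃ j, m j = m₀ ∧ oval z E0 (r j) = x - (m₀ : ℝ)
  · obtain ⟨j, _, hj⟩ := hex
    exact ⟨r j, m₀, hm₀1, by linarith⟩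
  · push_neg at hex
    have H' : ∀ ε : ℝ, 0 < ε →
        {n : ℕ →₀ ℕ | omass n ≤ M - m₀ ∧ |oval z E0 n - (x - (m₀ : ℝ))| < ε}.Infinite := by
      intro ε hε
      by_contra hfin
      rw [Set.not_infinite] at hfin
      obtain ⟨d, hd0, hdε, hdmin⟩ :=
        aux_minpos (hfin.image fun n => |oval z E0 n - (x - (m₀ : ℝ))|) hε
      obtain ⟨j, hjJ, hjgt⟩ := hJ.exists_gt ⌈(1 + (M : ℝ)) / d⌉₊
      have hjm : m j = m₀ := hjJ.2
      have hj1 : (1 + (M : ℝ)) * (1 / ((j : ℝ) + 1)) < d := by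
        have h1 : (1 + (M : ℝ)) / d ≤ (⌈(1 + (M : ℝ)) / d⌉₊ : ℝ) := Nat.le_ceil _
        have h2 : ((⌈(1 + (M : ℝ)) / d⌉₊ : ℝ)) < (j : ℝ) + 1 := by
          have : (⌈(1 + (M : ℝ)) / d⌉₊ : ℝ) < (j : ℝ) := by exact_mod_cast hjgt
          linarith
        have h3 : (1 + (M : ℝ)) / d < (j : ℝ) + 1 := lt_of_le_of_lt h1 h2
        have h4 : (1 + (M : ℝ)) < d * ((j : ℝ) + 1) := by
          rw [div_lt_iff₀ hd0] at h3
          nlinarith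
        rw [mul_one_div, div_lt_iff₀ (by positivity : (0:ℝ) < (j : ℝ) + 1)]
        nlinarith
      have hd1 : |x - (oval z E0 (r j) + (m₀ : ℝ))| < d := by
        have := hdist j
        rw [hjm] at this
        linarith
      have hd2 : |oval z E0 (r j) - (x - (m₀ : ℝ))| < d := by
        rw [abs_sub_comm] at hd1
        have : oval z E0 (r j) + (m₀ : ℝ) - x = oval z E0 (r j) - (x - (m₀ : ℝ)) := by ring
        rwa [this] at hd1
      have hmem' : r j ∈ {n : ℕ →₀ ℕ | omass n ≤ M - m₀ ∧
          |oval z E0 n - (x - (m₀ : ℝ))| < ε} := by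
        refine ⟨?_, lt_of_lt_of_le hd2 hdε⟩
        have := hm2 j
        omega
      have hpos : 0 < |oval z E0 (r j) - (x - (m₀ : ℝ))| :=
        abs_pos.2 (sub_ne_zero.2 (hex j hjm))
      exact absurd hd2 (not_lt.2 (hdmin _ ⟨r j, hmem', rfl⟩ hpos))
    have hM1 : m₀ ≤ M := hm₀M
    obtain ⟨r', j', hj'1, heq⟩ := IH (M - m₀) (by omega) (x - (m₀ : ℝ)) H'
    exact ⟨r', j' + m₀, by omega, by push_cast; linarith⟩

end
end Stmt15Aux

open Stmt15Aux

/-- Essential spectrum of the approximate Ornstein–Uhlenbeck type operator: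
with eigenvalue moduli `z k ≥ 0` (of the form arising from `I + T_ξ`: all positive,
infinitely many equal to `1`, accumulating only at `1`) and ground energy `E₀ ≥ 0`,
let `Λ = {E₀ + Σ n_k z k : n finitely supported}` (a multiset via the
parametrization `n ↦ val n`) and let `Λᵃ` be the set of accumulation points of `Λ`
together with the points of infinite multiplicity. Then `Λᵃ = Λ + ℕ`, `Λᵃ` is
closed, and `Λᵃ ⊆ Λ`. -/
theorem stmt15 (z : ℕ → ℝ) (hzpos : ∀ k, 0 < z k)
    (hz1 : {k | z k = 1}.Infinite)
    (hzacc : ∀ ε : ℝ, 0 < ε → {k | ε ≤ |z k - 1|}.Finite)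
    (E0 : ℝ) (hE0 : 0 ≤ E0) :
    ∀ val : (ℕ →₀ ℕ) → ℝ, (val = fun n => E0 + n.sum fun k c => (c : ℝ) * z k) →
    ∀ Λ : Set ℝ, Λ = Set.range val →
    ∀ Λa : Set ℝ,
      Λa = {x | AccPt x (Filter.principal Λ) ∨ {n : ℕ →₀ ℕ | val n = x}.Infinite} →
    Λa = {y | ∃ x ∈ Λ, ∃ n : ℕ, 0 < n ∧ y = x + n} ∧ IsClosed Λa ∧ Λa ⊆ Λ := by
  intro val hval Λ hΛ Λa hΛa
  have hov : val = oval z E0 := hval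
  subst hov hΛ hΛa
  set V := oval z E0 with hV
  set Λ : Set ℝ := Set.range V with hΛ
  set R : Set ℝ := {y | ∃ x ∈ Λ, ∃ n : ℕ, 0 < n ∧ y = x + n} with hR
  set Λa : Set ℝ := {x | AccPt x (Filter.principal Λ) ∨ {n : ℕ →₀ ℕ | V n = x}.Infinite}
    with hΛa
  -- R ⊆ Λ
  have hRΛ : R ⊆ Λ := by
    rintro y ⟨x, ⟨n₀, rfl⟩, j, hj, rfl⟩
    obtain ⟨k, hk⟩ := hz1.nonempty
    refine ⟨n₀ + Finsupp.single k j, ?_⟩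
    rw [hV, oval_add_single, hk, mul_one]
  -- R ⊆ Λa (infinite multiplicity)
  have hRΛa : R ⊆ Λa := by
    rintro y ⟨x, ⟨n₀, rfl⟩, j, hj, rfl⟩
    refine Or.inr ?_
    have hinj : Set.InjOn (fun k => n₀ + Finsupp.single k j) {k | z k = 1} := by
      intro k _ k' _ h
      have h2 : Finsupp.single k j = Finsupp.single k' j := by
        simpa using add_left_cancel h
      exact (Finsupp.single_left_inj (by omega)).1 h2
    refine Set.Infinite.mono ?_ (hz1.image hinj)
    rintro w ⟨k, hk, rfl⟩
    show V (n₀ + Finsupp.single k j) = V n₀ + (j : ℝ)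
    rw [hV, oval_add_single, hk, mul_one]
  -- Λa ⊆ R
  have hΛaR : Λa ⊆ R := by
    intro x hx
    obtain ⟨M, hM⟩ := massBound z E0 hzpos hzacc hE0 x
    have Hinf : ∀ ε : ℝ, 0 < ε →
        {n : ℕ →₀ ℕ | omass n ≤ M ∧ |V n - x| < ε}.Infinite := by
      intro ε hε
      rcases hx with hacc | hmul
      · by_contra hfin
        rw [Set.not_infinite] at hfin
        obtain ⟨d, hd0, hdε, hdmin⟩ :=
          aux_minpos (hfin.image fun n => |V n - x|) (lt_min hε one_pos)
        obtain ⟨y, ⟨hyball, n, rfl⟩, hyne⟩ := (accPt_iff_nhds (x := x) (C := Λ)).1 hacc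
          (Metric.ball x d) (Metric.ball_mem_nhds x hd0)
        have hdist : |V n - x| < d := by
          have := Metric.mem_ball.1 hyball
          rwa [Real.dist_eq] at this
        have hd1 : d ≤ 1 := hdε.trans (min_le_right _ _)
        have hmass : omass n ≤ M := by
          refine hM n ?_
          have := abs_lt.1 hdist
          linarith
        have hmem : n ∈ {n : ℕ →₀ ℕ | omass n ≤ M ∧ |V n - x| < ε} :=
          ⟨hmass, hdist.trans_le (hdε.trans (min_le_left _ _))⟩
        have hpos : 0 < |V n - x| := abs_pos.2 (sub_ne_zero.2 hyne)
        exact absurd hdist (not_lt.2 (hdmin _ ⟨n, hmem, rfl⟩ hpos))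
      · refine hmul.mono fun n hn => ?_
        have h1 : V n = x := hn
        refine ⟨hM n (by rw [show oval z E0 n = x from h1]; linarith), ?_⟩
        rw [h1]
        simpa using hε
    obtain ⟨r, j, hj1, heq⟩ := keyQ z E0 hzacc M x Hinf
    exact ⟨V r, ⟨r, rfl⟩, j, by omega, heq⟩
  have hmain : Λa = R := Set.Subset.antisymm hΛaR hRΛa
  refine ⟨hmain, ?_, hmain ▸ hRΛ⟩
  refine isClosed_of_closure_subset fun x hx => ?_
  by_cases hxa : x ∈ Λa
  · exact hxa
  · exfalso
    have h1 : Λa \ {x} = Λa := Set.diff_singleton_eq_self hxa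
    have h2 : AccPt x (Filter.principal Λa) := by
      rw [accPt_principal_iff_clusterPt, h1]
      exact mem_closure_iff_clusterPt.1 hx
    have h3 : AccPt x (Filter.principal Λ) :=
      h2.mono (Filter.principal_mono.2 (hmain ▸ hRΛ))
    exact hxa (Or.inl h3)
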